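/- Let B be an invertible m×m complex matrix, φ : ℝ → ℂ a continuous function with compact support, and s : ℝ → ℂᵐ a continuous function satisfying the equivariance s(x + k) = B^k·s(x) for all x ∈ ℝ and k ∈ ℤ. Then for every x ∈ ℝ, ∫_ℝ φ(t)·s(x + t) dt = ∫_0^1 K(x,t)·s(t) dt, where K(x,t) = Σ_{k∈ℤ} φ(t − x + k)·B^k is a locally finite sum of matrices; consequently ∫_0^1 tr K(x,x) dx = Σ_{k∈ℤ} φ(k)·tr(B^k), a finite sum. -/

import Mathlib

open MeasureTheory

/-- The smoothing kernel `K(x,t) = Σ_{k ∈ ℤ} φ(t - x + k)·B^k` of the suspension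
flow; for each `(x,t)` only finitely many summands are nonzero since `φ` has
compact support, so the finsum is a genuine finite sum. -/
noncomputable def suspensionKernel (m : ℕ) (B : (Matrix (Fin m) (Fin m) ℂ)ˣ)
    (φ : ℝ → ℂ) (x t : ℝ) : Matrix (Fin m) (Fin m) ℂ :=
  ∑ᶠ k : ℤ, φ (t - x + (k : ℝ)) • ((B ^ k : (Matrix (Fin m) (Fin m) ℂ)ˣ) : Matrix (Fin m) (Fin m) ℂ)

private lemma sum_mulVec' {m : ℕ} {ι : Type*} (S : Finset ι) (A : ι → Matrix (Fin m) (Fin m) ℂ)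
    (v : Fin m → ℂ) : (∑ k ∈ S, A k).mulVec v = ∑ k ∈ S, (A k).mulVec v := by
  induction S using Finset.cons_induction with
  | empty => simp [Matrix.zero_mulVec]
  | cons a s ha ih => simp [Finset.sum_cons, Matrix.add_mulVec, ih]

private lemma exists_bound {φ : ℝ → ℂ} (hsupp : HasCompactSupport φ) :
    ∃ R : ℝ, 0 ≤ R ∧ ∀ y : ℝ, φ y ≠ 0 → |y| ≤ R := by
  obtain ⟨r, hr⟩ := hsupp.isBounded.subset_closedBall 0
  refine ⟨max r 0, le_max_right _ _, fun y hy => ?_⟩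
  have := hr (subset_tsupport φ hy)
  rw [Metric.mem_closedBall, Real.dist_eq, sub_zero] at this
  exact this.trans (le_max_left _ _)

/-- Kernel computation for the Lefschetz formula for suspensions: for an invertible
matrix `B`, a continuous compactly supported `φ` and a continuous equivariant section
`s` (i.e. `s(x+k) = B^k s(x)`), the smoothed flow operator
`(L_φ s)(x) = ∫_ℝ φ(t) s(x+t) dt` is the integral operator on `[0,1]` with kernel
`K(x,t) = Σ_k φ(t-x+k) B^k`, and `∫_0^1 tr K(x,x) dx = Σ_k φ(k) tr(B^k)`. -/
theorem suspension_kernel_formula (m : ℕ) (B : (Matrix (Fin m) (Fin m) ℂ)ˣ)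
    (φ : ℝ → ℂ) (hφ : Continuous φ) (hsupp : HasCompactSupport φ)
    (s : ℝ → Fin m → ℂ) (hs : Continuous s)
    (hequiv : ∀ (x : ℝ) (k : ℤ), s (x + (k : ℝ)) =
      ((B ^ k : (Matrix (Fin m) (Fin m) ℂ)ˣ) : Matrix (Fin m) (Fin m) ℂ).mulVec (s x)) :
    (∀ x : ℝ, (∫ t : ℝ, φ t • s (x + t)) =
        ∫ t in (0 : ℝ)..1, (suspensionKernel m B φ x t).mulVec (s t)) ∧
    (∫ x in (0 : ℝ)..1, (suspensionKernel m B φ x x).trace) =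
      ∑ᶠ k : ℤ, φ (k : ℝ) *
        ((B ^ k : (Matrix (Fin m) (Fin m) ℂ)ˣ) : Matrix (Fin m) (Fin m) ℂ).trace := by
  obtain ⟨R, hR0, hR⟩ := exists_bound hsupp
  constructor
  · intro x
    set g : ℝ → Fin m → ℂ := fun t => φ (t - x) • s t with hgdef
    have hgc : Continuous g := (hφ.comp (continuous_id.sub continuous_const)).smul hs
    have hgsupp : HasCompactSupport g :=
      (hsupp.comp_homeomorph (Homeomorph.subRight x)).smul_right
    have hgint : Integrable g := hgc.integrable_of_hasCompactSupport hgsupp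
    obtain ⟨N, hN⟩ := exists_nat_ge (|x| + R + 1)
    have hN1 : (1 : ℝ) ≤ N := by have := abs_nonneg x; linarith
    set F : ℤ → ℝ → Fin m → ℂ := fun k t =>
      φ (t - x + (k : ℝ)) • ((B ^ k : (Matrix (Fin m) (Fin m) ℂ)ˣ) :
        Matrix (Fin m) (Fin m) ℂ).mulVec (s t) with hFdef
    have hFc : ∀ k : ℤ, Continuous (F k) := by
      intro k
      apply Continuous.smul (f := fun t => φ (t - x + (k : ℝ)))
        (g := fun t => ((B ^ k : (Matrix (Fin m) (Fin m) ℂ)ˣ) : Matrix (Fin m) (Fin m) ℂ).mulVec (s t))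
      · exact hφ.comp ((continuous_id.sub continuous_const).add continuous_const)
      · exact (LinearMap.continuous_of_finiteDimensional
          (Matrix.mulVecLin ((B ^ k : (Matrix (Fin m) (Fin m) ℂ)ˣ) :
            Matrix (Fin m) (Fin m) ℂ))).comp hs
    have hmap : Finset.Ico (-(N : ℤ)) (N : ℤ) =
        (Finset.range (2 * N)).map ⟨fun i : ℕ => (i : ℤ) - N,
          fun a b h => by simp only at h; omega⟩ := by
      ext k
      simp only [Finset.mem_Ico, Finset.mem_map, Finset.mem_range, Function.Embedding.coeFn_mk]
      constructor
      · rintro ⟨h1, h2⟩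
        exact ⟨(k + N).toNat, by omega, by show (((k + N).toNat : ℕ) : ℤ) - N = k; omega⟩
      · rintro ⟨a, ha, rfl⟩
        show -(N : ℤ) ≤ (a : ℤ) - N ∧ (a : ℤ) - N < N
        omega
    calc (∫ t : ℝ, φ t • s (x + t)) = ∫ t : ℝ, g t := by
          rw [← integral_add_right_eq_self g x]
          congr 1; funext t
          simp [hgdef, add_comm]
      _ = ∫ t in Set.Ioc (-(N : ℝ)) N, g t := by
          refine (setIntegral_eq_integral_of_forall_compl_eq_zero fun t ht => ?_).symm
          have hz : φ (t - x) = 0 := by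
            by_contra h
            have h1 := abs_le.1 (hR _ h)
            have hx1 := neg_abs_le x
            have hx2 := le_abs_self x
            exact ht ⟨by linarith, by linarith⟩
          simp [hgdef, hz]
      _ = ∫ t in (-(N : ℝ))..N, g t := by
          rw [intervalIntegral.integral_of_le (by linarith)]
      _ = ∑ i ∈ Finset.range (2 * N), ∫ t in (-(N : ℝ) + i)..(-(N : ℝ) + (i + 1 : ℕ)), g t := by
          rw [intervalIntegral.sum_integral_adjacent_intervals
            (a := fun i : ℕ => -(N : ℝ) + i) (μ := volume) (f := g) (n := 2 * N)
            (fun k _ => hgint.intervalIntegrable)]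
          congr 1 <;> push_cast <;> ring
      _ = ∑ i ∈ Finset.range (2 * N), ∫ t in (0 : ℝ)..1, F ((i : ℤ) - N) t := by
          refine Finset.sum_congr rfl fun i _ => ?_
          have hcast : -(N : ℝ) + (i : ℝ) = (((i : ℤ) - N : ℤ) : ℝ) := by push_cast; ring
          have h1 := intervalIntegral.integral_comp_add_right (a := (0 : ℝ)) (b := 1)
            g ((((i : ℤ) - N : ℤ) : ℝ))
          rw [show (0 : ℝ) + (((i : ℤ) - N : ℤ) : ℝ) = -(N : ℝ) + (i : ℝ) by push_cast; ring,
            show (1 : ℝ) + (((i : ℤ) - N : ℤ) : ℝ) = -(N : ℝ) + ((i + 1 : ℕ) : ℝ) by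
              push_cast; ring] at h1
          rw [← h1]
          refine intervalIntegral.integral_congr fun t _ => ?_
          show φ (t + (((i : ℤ) - N : ℤ) : ℝ) - x) • s (t + (((i : ℤ) - N : ℤ) : ℝ)) = _
          rw [hequiv t ((i : ℤ) - N),
            show t + (((i : ℤ) - N : ℤ) : ℝ) - x = t - x + (((i : ℤ) - N : ℤ) : ℝ) by ring]
      _ = ∑ k ∈ Finset.Ico (-(N : ℤ)) (N : ℤ), ∫ t in (0 : ℝ)..1, F k t := by
          rw [hmap, Finset.sum_map]
          rfl
      _ = ∫ t in (0 : ℝ)..1, ∑ k ∈ Finset.Ico (-(N : ℤ)) (N : ℤ), F k t := by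
          exact (intervalIntegral.integral_finset_sum
            (fun k _ => (hFc k).intervalIntegrable _ _)).symm
      _ = ∫ t in (0 : ℝ)..1, (suspensionKernel m B φ x t).mulVec (s t) := by
          refine intervalIntegral.integral_congr fun t ht => ?_
          rw [Set.uIcc_of_le (by norm_num : (0:ℝ) ≤ 1)] at ht
          obtain ⟨ht0, ht1⟩ := ht
          have hsub : (Function.support fun k : ℤ =>
              φ (t - x + (k : ℝ)) • ((B ^ k : (Matrix (Fin m) (Fin m) ℂ)ˣ) :
                Matrix (Fin m) (Fin m) ℂ)) ⊆ ↑(Finset.Ico (-(N : ℤ)) (N : ℤ)) := by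
            intro k hk
            have hφk : φ (t - x + (k : ℝ)) ≠ 0 := fun h => hk (by simp [h])
            have habs := abs_le.1 (hR _ hφk)
            have hx1 := neg_abs_le x
            have hx2 := le_abs_self x
            have h1 : -(N : ℝ) ≤ (k : ℝ) := by linarith [habs.1, habs.2]
            have h2 : (k : ℝ) < (N : ℝ) := by linarith [habs.1, habs.2]
            simp only [Finset.coe_Ico, Set.mem_Ico]
            exact ⟨by exact_mod_cast h1, by exact_mod_cast h2⟩
          rw [suspensionKernel, finsum_eq_sum_of_support_subset _ hsub, sum_mulVec']
          refine Finset.sum_congr rfl fun k _ => ?_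
          rw [Matrix.smul_mulVec]
  · have hsub1 : (Function.support fun k : ℤ =>
        φ ((k : ℝ)) • ((B ^ k : (Matrix (Fin m) (Fin m) ℂ)ˣ) : Matrix (Fin m) (Fin m) ℂ)) ⊆
        ↑(Finset.Icc (-⌈R⌉) ⌈R⌉) := by
      intro k hk
      have hφk : φ ((k : ℝ)) ≠ 0 := fun h => hk (by simp [h])
      have habs := abs_le.1 (hR _ hφk)
      have hc : R ≤ (⌈R⌉ : ℝ) := Int.le_ceil R
      simp only [Finset.coe_Icc, Set.mem_Icc]
      constructor
      · exact_mod_cast (show -(⌈R⌉ : ℝ) ≤ (k : ℝ) by linarith [habs.1])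
      · exact_mod_cast (show (k : ℝ) ≤ (⌈R⌉ : ℝ) by linarith [habs.2])
    have hsub2 : (Function.support fun k : ℤ =>
        φ ((k : ℝ)) * ((B ^ k : (Matrix (Fin m) (Fin m) ℂ)ˣ) :
          Matrix (Fin m) (Fin m) ℂ).trace) ⊆ ↑(Finset.Icc (-⌈R⌉) ⌈R⌉) := by
      intro k hk
      have hφk : φ ((k : ℝ)) ≠ 0 := fun h => hk (by simp [h])
      have habs := abs_le.1 (hR _ hφk)
      have hc : R ≤ (⌈R⌉ : ℝ) := Int.le_ceil R
      simp only [Finset.coe_Icc, Set.mem_Icc]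
      constructor
      · exact_mod_cast (show -(⌈R⌉ : ℝ) ≤ (k : ℝ) by linarith [habs.1])
      · exact_mod_cast (show (k : ℝ) ≤ (⌈R⌉ : ℝ) by linarith [habs.2])
    have hKx : ∀ x : ℝ, (suspensionKernel m B φ x x).trace =
        ∑ᶠ k : ℤ, φ (k : ℝ) *
          ((B ^ k : (Matrix (Fin m) (Fin m) ℂ)ˣ) : Matrix (Fin m) (Fin m) ℂ).trace := by
      intro x
      simp only [suspensionKernel, sub_self, zero_add]
      rw [finsum_eq_sum_of_support_subset _ hsub1, finsum_eq_sum_of_support_subset _ hsub2,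
        Matrix.trace_sum]
      exact Finset.sum_congr rfl fun k _ => by rw [Matrix.trace_smul, smul_eq_mul]
    rw [intervalIntegral.integral_congr (g := fun _ => ∑ᶠ k : ℤ, φ (k : ℝ) *
      ((B ^ k : (Matrix (Fin m) (Fin m) ℂ)ˣ) : Matrix (Fin m) (Fin m) ℂ).trace)
      (fun t _ => hKx t), intervalIntegral.integral_const]
    simp
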